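/- Hochschild cohomology of odd Moore algebras (Proposition 4.2, concretized): Let R be a commutative ring in which 2 is invertible, let k ≥ 1, and let w = ∑_{i≥k} w_i t^{2i} ∈ R[[t]] be an even power series whose first (possibly) nonzero coefficient w_k is not a zero divisor in R; assume R has no k-torsion (k·r = 0 implies r = 0). Write w'(t) = ∑_{i≥k} 2i·w_i t^{2i−1} for the formal derivative. On the R-module C of pairs (A,B) of power series in R[[t]] with zero constant coefficient, define the R-linear map d(A,B) := (B₁·w', 2t·A₁), where A₁ and B₁ denote the odd parts of A and B. Then d∘d = 0, and there is an isomorphism of R-modules (ker d)/(im d) ≅ R[[t]]/(w̃'), where w̃ := ∑_{i≥k} w_i t^i, w̃' = ∑_{i≥k} i·w_i t^{i−1} is its formal derivative, and (w̃') is the ideal it generates. (The complex (C,d) computes the Hochschild cohomology of the odd Moore algebra with A_∞-structure m₀ + w(t)∂_τ, so this proves HH*(A) ≅ R[[t]]/(w̃').) -/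

import Mathlib

open PowerSeries

set_option synthInstance.maxHeartbeats 1000000
set_option maxHeartbeats 1000000

variable {R : Type*} [CommRing R]

/-- The odd part of a power series, as an `R`-linear map. -/
noncomputable def oddPartL (R : Type*) [CommRing R] : R⟦X⟧ →ₗ[R] R⟦X⟧ where
  toFun f := PowerSeries.mk fun n => if Odd n then coeff n f else 0
  map_add' f g := by
    ext n
    simp only [coeff_mk, map_add]
    split_ifs <;> simp
  map_smul' c f := by
    ext n
    simp only [coeff_mk, map_smul, RingHom.id_apply, smul_eq_mul]
    split_ifs <;> simp

/-- The module `C` of pairs `(A,B)` of power series with zero constant coefficient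
(normalised derivations `A(t)∂_τ + B(t)∂_t`). -/
def NormPairs (R : Type*) [CommRing R] : Submodule R (R⟦X⟧ × R⟦X⟧) where
  carrier := {p | constantCoeff p.1 = 0 ∧ constantCoeff p.2 = 0}
  add_mem' := by
    rintro ⟨a₁, a₂⟩ ⟨b₁, b₂⟩ ⟨ha₁, ha₂⟩ ⟨hb₁, hb₂⟩
    simp_all
  zero_mem' := by simp
  smul_mem' := by
    rintro c ⟨a₁, a₂⟩ ⟨ha₁, ha₂⟩
    simp_all

/-- The Hochschild differential `d(A,B) = (B₁·w', 2t·A₁)` on the full module of pairs. -/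
noncomputable def dFull (R : Type*) [CommRing R] (w : R⟦X⟧) :
    (R⟦X⟧ × R⟦X⟧) →ₗ[R] (R⟦X⟧ × R⟦X⟧) :=
  LinearMap.prod
    (((LinearMap.mulLeft R w.derivativeFun).comp (oddPartL R)).comp (LinearMap.snd R R⟦X⟧ R⟦X⟧))
    (((LinearMap.mulLeft R (2 * PowerSeries.X)).comp (oddPartL R)).comp
      (LinearMap.fst R R⟦X⟧ R⟦X⟧))

theorem dFull_mem (R : Type*) [CommRing R] (w : R⟦X⟧) (p : R⟦X⟧ × R⟦X⟧)
    (hp : p ∈ NormPairs R) : dFull R w p ∈ NormPairs R := by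
  obtain ⟨A, B⟩ := p
  refine And.intro ?_ ?_ <;>
  · show constantCoeff _ = 0
    simp only [dFull, oddPartL, LinearMap.prod_apply, LinearMap.comp_apply, LinearMap.coe_mk,
      AddHom.coe_mk, LinearMap.mulLeft_apply, LinearMap.snd_apply, LinearMap.fst_apply,
      Pi.prod, map_mul]
    have h0 : ∀ f : R⟦X⟧,
        constantCoeff (PowerSeries.mk fun n => if Odd n then coeff n f else 0) = 0 := by
      intro f
      rw [← coeff_zero_eq_constantCoeff_apply, coeff_mk]
      simp [Nat.odd_iff]
    simp [h0]

/-- The Hochschild differential restricted to the complex `C` of normalised derivations. -/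
noncomputable def dC (R : Type*) [CommRing R] (w : R⟦X⟧) : NormPairs R →ₗ[R] NormPairs R :=
  (dFull R w).restrict (fun p hp => dFull_mem R w p hp)

namespace OMhelp

variable {R : Type*} [CommRing R]

/-- All even-degree coefficients vanish. -/
def IsOddPS (f : R⟦X⟧) : Prop := ∀ n : ℕ, Even n → coeff n f = 0

/-- All odd-degree coefficients vanish. -/
def IsEvenPS (f : R⟦X⟧) : Prop := ∀ n : ℕ, Odd n → coeff n f = 0

lemma mul_odd_odd {f g : R⟦X⟧} (hf : IsOddPS f) (hg : IsOddPS g) : IsEvenPS (f * g) := by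
  intro n hn
  rw [coeff_mul]
  apply Finset.sum_eq_zero
  rintro ⟨i, j⟩ hij
  rw [Finset.HasAntidiagonal.mem_antidiagonal] at hij
  rcases Nat.even_or_odd i with hi | hi
  · rw [hf i hi, zero_mul]
  · have hj : Even j := by
      rw [Nat.even_iff]; rw [Nat.odd_iff] at hn hi; omega
    rw [hg j hj, mul_zero]

lemma mul_even_even {f g : R⟦X⟧} (hf : IsEvenPS f) (hg : IsEvenPS g) : IsEvenPS (f * g) := by
  intro n hn
  rw [coeff_mul]
  apply Finset.sum_eq_zero
  rintro ⟨i, j⟩ hij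
  rw [Finset.HasAntidiagonal.mem_antidiagonal] at hij
  rcases Nat.even_or_odd i with hi | hi
  · have hj : Odd j := by
      rw [Nat.odd_iff]; rw [Nat.odd_iff] at hn; rw [Nat.even_iff] at hi; omega
    rw [hg j hj, mul_zero]
  · rw [hf i hi, zero_mul]

lemma mul_odd_even {f g : R⟦X⟧} (hf : IsOddPS f) (hg : IsEvenPS g) : IsOddPS (f * g) := by
  intro n hn
  rw [coeff_mul]
  apply Finset.sum_eq_zero
  rintro ⟨i, j⟩ hij
  rw [Finset.HasAntidiagonal.mem_antidiagonal] at hij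
  rcases Nat.even_or_odd i with hi | hi
  · rw [hf i hi, zero_mul]
  · have hj : Odd j := by
      rw [Nat.odd_iff]; rw [Nat.odd_iff] at hi; rw [Nat.even_iff] at hn; omega
    rw [hg j hj, mul_zero]

lemma X_isOdd : IsOddPS (X : R⟦X⟧) := by
  intro n hn
  rw [coeff_X, if_neg]
  rintro rfl
  simp [Nat.even_iff] at hn

lemma C_mul_isOdd {f : R⟦X⟧} (a : R) (hf : IsOddPS f) : IsOddPS (C a * f) := by
  intro n hn
  rw [coeff_C_mul, hf n hn, mul_zero]

lemma two_eq_C : (2 : R⟦X⟧) = C 2 := by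
  rw [map_ofNat]

/-- "Stretch": substitute `t ↦ t²`. -/
noncomputable def stretch (f : R⟦X⟧) : R⟦X⟧ :=
  PowerSeries.mk fun m => if Even m then coeff (m / 2) f else 0

lemma stretch_isEven (f : R⟦X⟧) : IsEvenPS (stretch f) := by
  intro n hn
  rw [stretch, coeff_mk, if_neg (Nat.not_even_iff_odd.mpr hn)]

lemma coeff_stretch (f : R⟦X⟧) (n : ℕ) : coeff (2 * n) (stretch f) = coeff n f := by
  rw [stretch, coeff_mk, if_pos ⟨n, (two_mul n)⟩, Nat.mul_div_cancel_left n two_pos]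

lemma stretch_mul (f g : R⟦X⟧) : stretch (f * g) = stretch f * stretch g := by
  have key : ∀ m : ℕ, coeff (2 * m) (stretch f * stretch g) = coeff m (f * g) := by
    intro m
    rw [coeff_mul, coeff_mul]
    rw [← Finset.sum_filter_of_ne (p := fun p : ℕ × ℕ => Even p.1)
      (by
        rintro ⟨i, j⟩ - hne
        by_contra hi
        exact hne (by
          show coeff i (stretch f) * coeff j (stretch g) = 0
          rw [(stretch_isEven f) i (Nat.not_even_iff_odd.mp hi), zero_mul]))]
    refine Finset.sum_bij' (fun p _ => (p.1 / 2, p.2 / 2)) (fun q _ => (2 * q.1, 2 * q.2))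
      ?_ ?_ ?_ ?_ ?_
    · rintro ⟨i, j⟩ hij
      simp only [Finset.mem_filter, Finset.HasAntidiagonal.mem_antidiagonal, Nat.even_iff] at hij ⊢
      omega
    · rintro ⟨a, b⟩ hab
      simp only [Finset.HasAntidiagonal.mem_antidiagonal] at hab
      simp only [Finset.mem_filter, Finset.HasAntidiagonal.mem_antidiagonal, Nat.even_iff]
      omega
    · rintro ⟨i, j⟩ hij
      simp only [Finset.mem_filter, Finset.HasAntidiagonal.mem_antidiagonal, Nat.even_iff] at hij
      simp only [Prod.mk.injEq]
      omega
    · rintro ⟨a, b⟩ hab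
      simp only [Prod.mk.injEq]
      omega
    · rintro ⟨i, j⟩ hij
      simp only [Finset.mem_filter, Finset.HasAntidiagonal.mem_antidiagonal, Nat.even_iff] at hij
      show coeff i (stretch f) * coeff j (stretch g) = coeff (i / 2) f * coeff (j / 2) g
      rw [stretch, stretch, coeff_mk, coeff_mk, if_pos (Nat.even_iff.mpr (by omega)),
        if_pos (Nat.even_iff.mpr (by omega))]
  ext n
  rcases Nat.even_or_odd n with hn | hn
  · obtain ⟨m, rfl⟩ : ∃ m, n = 2 * m := ⟨n / 2, by rw [Nat.even_iff] at hn; omega⟩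
    rw [coeff_stretch, key]
  · rw [(stretch_isEven (f * g)) n hn,
      (mul_even_even (stretch_isEven f) (stretch_isEven g)) n hn]

lemma stretch_C (a : R) : stretch (C a) = C a := by
  ext n
  rcases Nat.even_or_odd n with hn | hn
  · obtain ⟨m, rfl⟩ : ∃ m, n = 2 * m := ⟨n / 2, by rw [Nat.even_iff] at hn; omega⟩
    rw [coeff_stretch, coeff_C, coeff_C]
    rcases Nat.eq_zero_or_pos m with rfl | hm
    · simp
    · rw [if_neg (by omega), if_neg (by omega)]
  · rw [(stretch_isEven (C a)) n hn, coeff_C, if_neg (by rw [Nat.odd_iff] at hn; omega)]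

/-- A power series whose low coefficients vanish and whose coefficient in degree `m`
is a non-zero-divisor is itself a non-zero-divisor. -/
lemma reg_mul {m : ℕ} {f : R⟦X⟧} (hreg : ∀ r : R, coeff m f * r = 0 → r = 0)
    (hlow : ∀ i, i < m → coeff i f = 0) {g : R⟦X⟧} (hfg : f * g = 0) : g = 0 := by
  ext n
  rw [map_zero]
  induction n using Nat.strong_induction_on with
  | _ n ih =>
    have h := congrArg (coeff (m + n)) hfg
    rw [map_zero, coeff_mul, Finset.sum_eq_single (m, n)] at h
    · exact hreg _ h
    · rintro ⟨i, j⟩ hij hne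
      rw [Finset.HasAntidiagonal.mem_antidiagonal] at hij
      have hne' : ¬(i = m ∧ j = n) := by simpa [Prod.ext_iff] using hne
      rcases lt_or_ge j n with hj | hj
      · rw [ih j hj, mul_zero]
      · rw [hlow i (by omega), zero_mul]
    · intro habs
      simp at habs

end OMhelp

namespace OMhelp

variable {R : Type*} [CommRing R]

lemma coeff_oddPartL (f : R⟦X⟧) (n : ℕ) :
    coeff n (oddPartL R f) = if Odd n then coeff n f else 0 := by
  simp only [oddPartL, LinearMap.coe_mk, AddHom.coe_mk, coeff_mk]

lemma oddPartL_isOdd (f : R⟦X⟧) : IsOddPS (oddPartL R f) := by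
  intro n hn
  rw [coeff_oddPartL, if_neg (Nat.not_odd_iff_even.mpr hn)]

lemma oddPartL_of_odd {f : R⟦X⟧} (hf : IsOddPS f) : oddPartL R f = f := by
  ext n
  rw [coeff_oddPartL]
  rcases Nat.even_or_odd n with hn | hn
  · rw [if_neg (Nat.not_odd_iff_even.mpr hn), hf n hn]
  · rw [if_pos hn]

lemma oddPartL_of_even {f : R⟦X⟧} (hf : IsEvenPS f) : oddPartL R f = 0 := by
  ext n
  rw [coeff_oddPartL, map_zero]
  rcases Nat.even_or_odd n with hn | hn
  · rw [if_neg (Nat.not_odd_iff_even.mpr hn)]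
  · rw [if_pos hn, hf n hn]

lemma isEven_of_oddPartL_eq_zero {f : R⟦X⟧} (h : oddPartL R f = 0) : IsEvenPS f := by
  intro n hn
  have := congrArg (coeff n) h
  rwa [coeff_oddPartL, if_pos hn, map_zero] at this

lemma coeff_derivativeFun' (f : R⟦X⟧) (n : ℕ) :
    coeff n f.derivativeFun = coeff (n + 1) f * (n + 1) :=
  coeff_derivative f n

lemma deriv_isOdd {w : R⟦X⟧} (heven : ∀ n : ℕ, Odd n → coeff n w = 0) :
    IsOddPS w.derivativeFun := by
  intro n hn
  rw [coeff_derivativeFun', heven (n + 1) (Even.add_one hn), zero_mul]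

lemma deriv_eq {w : R⟦X⟧} (heven : ∀ n : ℕ, Odd n → coeff n w = 0) :
    w.derivativeFun
      = C 2 * (X * stretch (PowerSeries.mk fun n => coeff (2 * n) w).derivativeFun) := by
  ext m
  rcases Nat.even_or_odd m with hm | hm
  · rw [deriv_isOdd heven m hm, coeff_C_mul,
      (mul_odd_even X_isOdd (stretch_isEven _)) m hm, mul_zero]
  · obtain ⟨a, rfl⟩ := hm
    rw [coeff_derivativeFun', coeff_C_mul, coeff_succ_X_mul, coeff_stretch,
      coeff_derivativeFun', coeff_mk]
    have h1 : 2 * (a + 1) = 2 * a + 1 + 1 := by ring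
    rw [h1]
    push_cast
    ring

lemma odd_decomp {f : R⟦X⟧} (hf : IsOddPS f) :
    f = X * stretch (PowerSeries.mk fun b => coeff (2 * b + 1) f) := by
  ext m
  match m with
  | 0 => rw [hf 0 Even.zero, coeff_zero_X_mul]
  | m + 1 =>
    rw [coeff_succ_X_mul]
    rcases Nat.even_or_odd m with hm | hm
    · obtain ⟨b, rfl⟩ : ∃ b, m = 2 * b := ⟨m / 2, by rw [Nat.even_iff] at hm; omega⟩
      rw [coeff_stretch, coeff_mk]
    · rw [hf (m + 1) (Odd.add_one hm), (stretch_isEven _) m hm]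

lemma even_decomp {f : R⟦X⟧} (hf : IsEvenPS f) (h0 : coeff 0 f = 0) :
    f = X ^ 2 * stretch (PowerSeries.mk fun n => coeff (2 * n + 2) f) := by
  ext m
  rw [coeff_X_pow_mul']
  rcases lt_or_ge m 2 with hm | hm
  · rw [if_neg (by omega)]
    interval_cases m
    · exact h0
    · exact hf 1 odd_one
  · rw [if_pos hm]
    rcases Nat.even_or_odd m with hme | hmo
    · obtain ⟨n, rfl⟩ : ∃ n, m = 2 * n + 2 := ⟨(m - 2) / 2, by rw [Nat.even_iff] at hme; omega⟩
      have h1 : 2 * n + 2 - 2 = 2 * n := by omega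
      rw [h1, coeff_stretch, coeff_mk]
    · rw [hf m hmo, (stretch_isEven _) (m - 2) (by rw [Nat.odd_iff] at hmo ⊢; omega)]

/-- `EL f = ∑ coeff_{2n+2}(f) tⁿ`, the compress-and-shift map. -/
noncomputable def EL (R : Type*) [CommRing R] : R⟦X⟧ →ₗ[R] R⟦X⟧ where
  toFun f := PowerSeries.mk fun n => coeff (2 * n + 2) f
  map_add' f g := by ext n; simp [coeff_mk]
  map_smul' c f := by ext n; simp [coeff_mk]

lemma EL_stretch (h : R⟦X⟧) : EL R (X ^ 2 * stretch h) = h := by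
  ext n
  simp only [EL, LinearMap.coe_mk, AddHom.coe_mk, coeff_mk]
  rw [coeff_X_pow_mul', if_pos (by omega)]
  have h1 : 2 * n + 2 - 2 = 2 * n := by omega
  rw [h1, coeff_stretch]

lemma dFull_apply (w : R⟦X⟧) (p : R⟦X⟧ × R⟦X⟧) :
    dFull R w p = (w.derivativeFun * oddPartL R p.2, (2 * X) * oddPartL R p.1) := rfl

lemma dC_coe (w : R⟦X⟧) (x : NormPairs R) :
    ((dC R w x : NormPairs R) : R⟦X⟧ × R⟦X⟧) = dFull R w ↑x := rfl

end OMhelp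

/-- **Hochschild cohomology of odd Moore algebras** (Proposition 4.2).  For an odd Moore
algebra with structure `m₀ + w(t)∂_τ`, `w = ∑_{i≥k} w_i t^{2i}` with `w_k` not a zero
divisor, `2` invertible and `R` without `k`-torsion, the differential squares to zero and
the cohomology of the complex is `R[[t]]/(w̃')` where `w̃(t) := ∑_{i≥k} w_i t^i`. -/
theorem hochschild_cohomology_odd_moore (R : Type*) [CommRing R] (k : ℕ) (hk : 1 ≤ k)
    (w : R⟦X⟧) (h2 : IsUnit (2 : R))
    (heven : ∀ n : ℕ, Odd n → coeff n w = 0)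
    (hlow : ∀ i : ℕ, i < k → coeff (2 * i) w = 0)
    (hreg : ∀ r : R, coeff (2 * k) w * r = 0 → r = 0)
    (htor : ∀ r : R, (k : R) * r = 0 → r = 0) :
    (dC R w).comp (dC R w) = 0 ∧
    -- the homology `(ker d)/(im d)` is isomorphic, as an `R`-module, to `R⟦X⟧/(w̃')`:
    -- there is a surjective `R`-linear map from `ker d` onto `R⟦X⟧/(w̃')` whose kernel is
    -- exactly `im d` (viewed inside `ker d`).
    ∃ φ : LinearMap.ker (dC R w) →ₗ[R]
        (R⟦X⟧ ⧸ Ideal.span {(PowerSeries.mk fun n => coeff (2 * n) w).derivativeFun}),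
      Function.Surjective φ ∧
      LinearMap.ker φ = (LinearMap.range (dC R w)).comap (LinearMap.ker (dC R w)).subtype := by
  classical
  obtain ⟨v, hv⟩ := h2.exists_right_inv
  have hC2v : (C 2) * (C v) = 1 := by rw [← map_mul, hv, map_one]
  set wt : R⟦X⟧ := PowerSeries.mk fun n => coeff (2 * n) w with hwt
  set D : R⟦X⟧ := wt.derivativeFun with hD
  have hwod : OMhelp.IsOddPS w.derivativeFun := OMhelp.deriv_isOdd heven
  have hI1 : w.derivativeFun = C 2 * (X * OMhelp.stretch D) := OMhelp.deriv_eq heven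
  -- regularity of `w'`
  have hwreg : ∀ g : R⟦X⟧, w.derivativeFun * g = 0 → g = 0 := by
    intro g
    refine OMhelp.reg_mul (m := 2 * k - 1) ?_ ?_
    · intro r hr
      rw [OMhelp.coeff_derivativeFun'] at hr
      have e1 : 2 * k - 1 + 1 = 2 * k := by omega
      rw [← Nat.cast_add_one, e1] at hr
      have h1 : coeff (2 * k) w * (((2 * k : ℕ) : R) * r) = 0 := by
        rw [← mul_assoc]; exact hr
      have h2k := hreg _ h1
      push_cast at h2k
      have hkr : (k : R) * r = 0 := by
        calc (k : R) * r = (2 * v) * ((k : R) * r) := by rw [hv, one_mul]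
        _ = v * (2 * ↑k * r) := by ring
        _ = 0 := by rw [h2k, mul_zero]
      exact htor r hkr
    · intro i hi
      rw [OMhelp.coeff_derivativeFun']
      rcases Nat.even_or_odd i with he | ho
      · rw [heven (i + 1) (Even.add_one he), zero_mul]
      · obtain ⟨j, rfl⟩ := ho
        have e2 : 2 * j + 1 + 1 = 2 * (j + 1) := by ring
        rw [e2, hlow (j + 1) (by omega), zero_mul]
  -- regularity of `2X`
  have h2Xreg : ∀ g : R⟦X⟧, (2 * X) * g = 0 → g = 0 := by
    intro g
    refine OMhelp.reg_mul (m := 1) ?_ ?_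
    · intro r hr
      rw [OMhelp.two_eq_C, coeff_C_mul, coeff_one_X, mul_one] at hr
      calc r = (2 * v) * r := by rw [hv, one_mul]
      _ = v * (2 * r) := by ring
      _ = 0 := by rw [hr, mul_zero]
    · intro i hi
      interval_cases i
      rw [OMhelp.two_eq_C, coeff_C_mul, coeff_zero_X, mul_zero]
  have hC2even : OMhelp.IsEvenPS (C (2:R)) := by
    intro n hn
    rw [coeff_C, if_neg (by rintro rfl; simp [Nat.odd_iff] at hn)]
  -- part 1 : d ∘ d = 0
  have hdd : (dC R w).comp (dC R w) = 0 := by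
    apply LinearMap.ext
    intro p
    rw [LinearMap.comp_apply, LinearMap.zero_apply]
    apply Subtype.ext
    rw [OMhelp.dC_coe, OMhelp.dC_coe, ZeroMemClass.coe_zero, OMhelp.dFull_apply,
      OMhelp.dFull_apply]
    have e1 : oddPartL R (w.derivativeFun * oddPartL R ((p : R⟦X⟧ × R⟦X⟧)).2) = 0 :=
      OMhelp.oddPartL_of_even (OMhelp.mul_odd_odd hwod (OMhelp.oddPartL_isOdd _))
    have e2 : oddPartL R ((2 * X) * oddPartL R ((p : R⟦X⟧ × R⟦X⟧)).1) = 0 :=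
      OMhelp.oddPartL_of_even (by
        rw [OMhelp.two_eq_C, mul_assoc]
        exact OMhelp.mul_even_even hC2even
          (OMhelp.mul_odd_odd OMhelp.X_isOdd (OMhelp.oddPartL_isOdd _)))
    show (w.derivativeFun * oddPartL R ((2 * X) * oddPartL R ((p : R⟦X⟧ × R⟦X⟧)).1),
      (2 * X) * oddPartL R (w.derivativeFun * oddPartL R ((p : R⟦X⟧ × R⟦X⟧)).2)) = 0
    rw [e1, e2, mul_zero, mul_zero]
    rfl
  set I : Ideal R⟦X⟧ := Ideal.span {D} with hI
  refine ⟨hdd, (Ideal.Quotient.mkₐ R I).toLinearMap ∘ₗ OMhelp.EL R ∘ₗ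
    LinearMap.fst R R⟦X⟧ R⟦X⟧ ∘ₗ (NormPairs R).subtype ∘ₗ
    (LinearMap.ker (dC R w)).subtype, ?_, ?_⟩
  · -- surjectivity
    intro q
    obtain ⟨g, rfl⟩ := Ideal.Quotient.mk_surjective q
    set A : R⟦X⟧ := X ^ 2 * OMhelp.stretch g with hA
    have hAeven : OMhelp.IsEvenPS A := by
      rw [hA, pow_two]
      exact OMhelp.mul_even_even (OMhelp.mul_odd_odd OMhelp.X_isOdd OMhelp.X_isOdd)
        (OMhelp.stretch_isEven g)
    have hA0 : constantCoeff A = 0 := by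
      rw [hA, ← coeff_zero_eq_constantCoeff_apply, coeff_X_pow_mul', if_neg (by omega)]
    have hmem : ((A, (0 : R⟦X⟧)) : R⟦X⟧ × R⟦X⟧) ∈ NormPairs R := ⟨hA0, map_zero _⟩
    have hker : (⟨(A, 0), hmem⟩ : NormPairs R) ∈ LinearMap.ker (dC R w) := by
      rw [LinearMap.mem_ker]
      apply Subtype.ext
      rw [OMhelp.dC_coe, ZeroMemClass.coe_zero, OMhelp.dFull_apply]
      show (w.derivativeFun * oddPartL R 0, (2 * X) * oddPartL R A) = 0
      rw [map_zero, mul_zero, OMhelp.oddPartL_of_even hAeven, mul_zero]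
      rfl
    refine ⟨⟨⟨(A, 0), hmem⟩, hker⟩, ?_⟩
    show Ideal.Quotient.mk I (OMhelp.EL R A) = Ideal.Quotient.mk I g
    rw [hA, OMhelp.EL_stretch]
  · -- kernel = image
    ext x
    rw [LinearMap.mem_ker, Submodule.mem_comap, LinearMap.mem_range]
    obtain ⟨⟨⟨A, B⟩, hnorm⟩, hxker⟩ := x
    have hd : dFull R w (A, B) = 0 := by
      have h := congrArg Subtype.val (LinearMap.mem_ker.mp hxker)
      rwa [OMhelp.dC_coe, ZeroMemClass.coe_zero] at h
    rw [OMhelp.dFull_apply] at hd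
    have hd1 : w.derivativeFun * oddPartL R B = 0 := congrArg Prod.fst hd
    have hd2 : (2 * X) * oddPartL R A = 0 := congrArg Prod.snd hd
    have hBeven : OMhelp.IsEvenPS B := OMhelp.isEven_of_oddPartL_eq_zero (hwreg _ hd1)
    have hAeven : OMhelp.IsEvenPS A := OMhelp.isEven_of_oddPartL_eq_zero (h2Xreg _ hd2)
    constructor
    · -- φ x = 0 → x ∈ image
      intro hφx
      have hx' : Ideal.Quotient.mk I (OMhelp.EL R A) = 0 := hφx
      have hdvd : D ∣ OMhelp.EL R A :=
        Ideal.mem_span_singleton.mp (Ideal.Quotient.eq_zero_iff_mem.mp hx')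
      obtain ⟨g, hg⟩ := hdvd
      have hg' : (PowerSeries.mk fun n => coeff (2 * n + 2) A) = D * g := hg
      set shiftB : R⟦X⟧ := PowerSeries.mk fun m => coeff (m + 1) B with hsB
      set Y : R⟦X⟧ := C v * (X * OMhelp.stretch g) with hY
      set P1 : R⟦X⟧ := C v * shiftB with hP1
      have hshift_odd : OMhelp.IsOddPS shiftB := by
        intro m hm
        rw [hsB, coeff_mk]
        exact hBeven (m + 1) (Even.add_one hm)
      have hYodd : OMhelp.IsOddPS Y :=
        OMhelp.C_mul_isOdd v (OMhelp.mul_odd_even OMhelp.X_isOdd (OMhelp.stretch_isEven g))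
      have hP1odd : OMhelp.IsOddPS P1 := OMhelp.C_mul_isOdd v hshift_odd
      have hmem' : ((P1, Y) : R⟦X⟧ × R⟦X⟧) ∈ NormPairs R := by
        refine And.intro ?_ ?_
        · show constantCoeff P1 = 0
          rw [hP1, ← coeff_zero_eq_constantCoeff_apply, coeff_C_mul, hsB, coeff_mk,
            hBeven 1 odd_one, mul_zero]
        · show constantCoeff Y = 0
          rw [hY, ← coeff_zero_eq_constantCoeff_apply, coeff_C_mul, coeff_zero_X_mul,
            mul_zero]
      have hBshift : B = X * shiftB := by
        ext m
        match m with
        | 0 =>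
          rw [coeff_zero_X_mul, coeff_zero_eq_constantCoeff_apply]
          exact hnorm.2
        | m + 1 => rw [coeff_succ_X_mul, hsB, coeff_mk]
      have hAdec : A = X ^ 2 * OMhelp.stretch (D * g) := by
        have h := OMhelp.even_decomp hAeven
          (by rw [coeff_zero_eq_constantCoeff_apply]; exact hnorm.1)
        rwa [hg'] at h
      have comp1 : w.derivativeFun * oddPartL R Y = A := by
        rw [OMhelp.oddPartL_of_odd hYodd, hI1, hAdec, OMhelp.stretch_mul, hY]
        linear_combination (X ^ 2 * OMhelp.stretch D * OMhelp.stretch g) * hC2v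
      have comp2 : (2 * X) * oddPartL R P1 = B := by
        rw [OMhelp.oddPartL_of_odd hP1odd, hP1]
        conv_rhs => rw [hBshift]
        rw [OMhelp.two_eq_C]
        linear_combination (X * shiftB) * hC2v
      refine ⟨⟨(P1, Y), hmem'⟩, ?_⟩
      apply Subtype.ext
      rw [OMhelp.dC_coe, OMhelp.dFull_apply]
      show (w.derivativeFun * oddPartL R Y, (2 * X) * oddPartL R P1) = (A, B)
      rw [comp1, comp2]
    · -- x ∈ image → φ x = 0
      rintro ⟨⟨⟨P1, Y⟩, hymem⟩, hy⟩
      have hy' : dFull R w (P1, Y) = (A, B) := by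
        have h := congrArg Subtype.val hy
        rwa [OMhelp.dC_coe] at h
      rw [OMhelp.dFull_apply] at hy'
      have hA' : w.derivativeFun * oddPartL R Y = A := congrArg Prod.fst hy'
      have hOodd : OMhelp.IsOddPS (oddPartL R Y) := OMhelp.oddPartL_isOdd Y
      set cO : R⟦X⟧ := PowerSeries.mk fun b => coeff (2 * b + 1) (oddPartL R Y) with hcO
      have hOdec : oddPartL R Y = X * OMhelp.stretch cO := OMhelp.odd_decomp hOodd
      have key : w.derivativeFun * oddPartL R Y
          = X ^ 2 * OMhelp.stretch (C 2 * D * cO) := by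
        rw [hI1]
        conv_lhs => rw [hOdec]
        rw [OMhelp.stretch_mul, OMhelp.stretch_mul, OMhelp.stretch_C]
        ring
      show Ideal.Quotient.mk I (OMhelp.EL R A) = 0
      rw [← hA', key, OMhelp.EL_stretch, Ideal.Quotient.eq_zero_iff_mem]
      exact Ideal.mem_span_singleton.mpr ⟨C 2 * cO, by ring⟩
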